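/- Over a finite field 𝔽_q with q odd, the number of symmetric n×n matrices of rank r = 2s over 𝔽_q equals Π_{i=1}^{s} q^{2i}/(q^{2i}−1) · Π_{i=0}^{2s−1} (q^{n−i} − 1). -/

import Mathlib

set_option linter.unusedSectionVars false

open Matrix Finset Module Submodule

variable {F : Type} [Field F] [Fintype F]

section RankLemmas

variable {m n o : Type} [Fintype m] [Fintype n] [Fintype o] [DecidableEq m] [DecidableEq n]

omit [Fintype F] in
lemma finrank_sup_span_singleton {V : Type} [AddCommGroup V] [Module F V]
    [FiniteDimensional F V] (W : Submodule F V) (v : V) (hv : v ∉ W) :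
    finrank F ↥(W ⊔ Submodule.span F {v}) = finrank F W + 1 := by
  have h := Submodule.finrank_sup_add_finrank_inf_eq W (Submodule.span F {v})
  have hv0 : v ≠ 0 := fun h0 => hv (h0 ▸ W.zero_mem)
  have hinf : W ⊓ Submodule.span F {v} = ⊥ := by
    rw [eq_bot_iff]
    rintro x ⟨hxW, hxv⟩
    obtain ⟨c, rfl⟩ := Submodule.mem_span_singleton.mp hxv
    rcases eq_or_ne c 0 with rfl | hc
    · simp
    · exact absurd (by simpa [smul_smul, inv_mul_cancel₀ hc] using W.smul_mem c⁻¹ hxW) hv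
  rw [hinf, finrank_bot, add_zero, finrank_span_singleton hv0] at h
  omega

omit [DecidableEq m] [DecidableEq n] in
lemma range_fromColumns (A : Matrix m n F) (B : Matrix m o F) :
    LinearMap.range (fromCols A B).mulVecLin
      = LinearMap.range A.mulVecLin ⊔ LinearMap.range B.mulVecLin := by
  apply le_antisymm
  · rintro w ⟨x, rfl⟩
    have hx : x = Sum.elim (x ∘ Sum.inl) (x ∘ Sum.inr) := by ext (i|i) <;> rfl
    rw [mulVecLin_apply, hx, fromCols_mulVec_sumElim]
    exact Submodule.add_mem_sup (LinearMap.mem_range.mpr ⟨x ∘ Sum.inl, rfl⟩)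
      (LinearMap.mem_range.mpr ⟨x ∘ Sum.inr, rfl⟩)
  · rw [sup_le_iff]
    constructor
    · rintro w ⟨x, rfl⟩
      exact ⟨Sum.elim x 0, by simp [mulVecLin_apply]⟩
    · rintro w ⟨x, rfl⟩
      exact ⟨Sum.elim 0 x, by simp [mulVecLin_apply]⟩

omit [DecidableEq m] in
lemma range_col (v : m → F) :
    LinearMap.range (Matrix.replicateCol (Fin 1) v).mulVecLin = Submodule.span F {v} := by
  apply le_antisymm
  · rintro w ⟨x, rfl⟩
    apply Submodule.mem_span_singleton.mpr ⟨x 0, ?_⟩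
    ext i
    simp [mulVecLin_apply, mulVec, dotProduct, Fin.sum_univ_one, replicateCol, mul_comm]
  · rw [Submodule.span_singleton_le_iff_mem]
    refine ⟨fun _ => 1, ?_⟩
    ext i
    simp [mulVecLin_apply, mulVec, dotProduct, Fin.sum_univ_one, replicateCol]

omit [DecidableEq m] [DecidableEq n] in
lemma rank_fromColumns_col_of_not_mem (A : Matrix m n F) (v : m → F)
    (hv : v ∉ LinearMap.range A.mulVecLin) :
    (fromCols A (replicateCol (Fin 1) v)).rank = A.rank + 1 := by
  rw [Matrix.rank, range_fromColumns, range_col,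
    finrank_sup_span_singleton _ v hv, Matrix.rank]

omit [DecidableEq m] [DecidableEq n] in
lemma rank_fromRows_zero (A : Matrix m n F) :
    (fromRows A (0 : Matrix o n F)).rank = A.rank := by
  rw [← rank_transpose, transpose_fromRows, transpose_zero, Matrix.rank, range_fromColumns,
    Matrix.mulVecLin_zero, LinearMap.range_zero, sup_bot_eq, ← Matrix.rank, rank_transpose]

omit [DecidableEq m] [DecidableEq n] in
lemma rank_fromColumns_zero (A : Matrix m n F) :
    (fromCols A (0 : Matrix m o F)).rank = A.rank := by
  rw [Matrix.rank, range_fromColumns, Matrix.mulVecLin_zero, LinearMap.range_zero,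
    sup_bot_eq, ← Matrix.rank]

omit [DecidableEq m] [DecidableEq n] in
lemma fromRows_single_eq_col (d : F) :
    (fromRows (0 : Matrix m (Fin 1) F) (Matrix.of (fun (_ _ : Fin 1) => d)))
      = replicateCol (Fin 1) (Sum.elim (0 : m → F) (fun _ => d)) := by
  ext (i|i) j <;> rfl

omit [DecidableEq m] [DecidableEq n] in
lemma rank_fromBlocks_diag_zero (A : Matrix m n F) :
    (fromBlocks A 0 0 (Matrix.of (fun (_ _ : Fin 1) => (0:F)))).rank = A.rank := by
  rw [← fromCols_fromRows_eq_fromBlocks, fromRows_single_eq_col]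
  have h1 : (Sum.elim (0 : m → F) (fun _ => (0:F)) : m ⊕ Fin 1 → F) = 0 := by
    ext (i|i) <;> rfl
  have h2 : replicateCol (Fin 1) (0 : m ⊕ Fin 1 → F) = (0 : Matrix (m ⊕ Fin 1) (Fin 1) F) := by
    ext i j; rfl
  rw [h1, h2, rank_fromColumns_zero, rank_fromRows_zero]

omit [DecidableEq m] [DecidableEq n] in
lemma rank_fromBlocks_diag_ne_zero (A : Matrix m n F) {d : F} (hd : d ≠ 0) :
    (fromBlocks A 0 0 (Matrix.of (fun (_ _ : Fin 1) => d))).rank = A.rank + 1 := by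
  rw [← fromCols_fromRows_eq_fromBlocks, fromRows_single_eq_col,
    ← rank_fromRows_zero A (o := Fin 1)]
  apply rank_fromColumns_col_of_not_mem
  rintro ⟨x, hx⟩
  rw [mulVecLin_apply, fromRows_mulVec] at hx
  have := congrFun hx (Sum.inr 0)
  simp at this
  exact hd this.symm

end RankLemmas

open Matrix Finset Module Submodule

section Stage2
variable {F : Type} [Field F] [Fintype F] {n : ℕ}

/-- The symmetric block matrix `[[C, b], [bᵀ, a]]`. -/
def Mblk (C : Matrix (Fin n) (Fin n) F) (b : Fin n → F) (a : F) :
    Matrix (Fin n ⊕ Fin 1) (Fin n ⊕ Fin 1) F :=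
  fromBlocks C (replicateCol (Fin 1) b) (replicateRow (Fin 1) b) (Matrix.of (fun _ _ => a))

lemma Mblk_isSymm {C : Matrix (Fin n) (Fin n) F} (hC : C.IsSymm) (b : Fin n → F) (a : F) :
    (Mblk C b a).IsSymm := by
  unfold Matrix.IsSymm Mblk
  rw [fromBlocks_transpose, transpose_replicateCol, transpose_replicateRow, hC]
  congr 1

lemma Mblk_eq_conj {C : Matrix (Fin n) (Fin n) F} (hC : C.IsSymm) (y : Fin n → F) (a : F) :
    Mblk C (C *ᵥ y) a
      = fromBlocks 1 0 (replicateRow (Fin 1) y) 1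
        * fromBlocks C 0 0 (Matrix.of (fun _ _ => a - y ⬝ᵥ C *ᵥ y))
        * (fromBlocks 1 0 (replicateRow (Fin 1) y) 1)ᵀ := by
  rw [fromBlocks_transpose, transpose_replicateRow, transpose_zero]
  simp only [transpose_one]
  rw [fromBlocks_multiply, fromBlocks_multiply]
  unfold Mblk
  rw [Matrix.fromBlocks_inj]
  refine ⟨by simp, by simp [← replicateCol_mulVec], ?_, ?_⟩
  · simp only [Matrix.zero_mul, Matrix.mul_zero, add_zero, zero_add, Matrix.mul_one,
      Matrix.one_mul]
    rw [← replicateRow_vecMul, ← hC, vecMul_transpose, hC]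
  · simp only [Matrix.zero_mul, Matrix.mul_zero, add_zero, zero_add, Matrix.mul_one,
      Matrix.one_mul]
    rw [← replicateRow_vecMul, ← hC, vecMul_transpose, hC, replicateRow_mul_replicateCol]
    ext i j
    simp only [Matrix.add_apply, Matrix.of_apply, dotProduct_comm (C *ᵥ y) y]
    ring

lemma rank_Mblk_mem {C : Matrix (Fin n) (Fin n) F} (hC : C.IsSymm) (y : Fin n → F) (a : F)
    (ha : a = y ⬝ᵥ C *ᵥ y) :
    (Mblk C (C *ᵥ y) a).rank = C.rank := by
  classical
  rw [Mblk_eq_conj hC y a]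
  rw [rank_mul_eq_left_of_isUnit_det, rank_mul_eq_right_of_isUnit_det]
  · rw [ha, sub_self]
    exact rank_fromBlocks_diag_zero C
  · rw [det_fromBlocks_zero₁₂]
    simp
  · rw [det_transpose, det_fromBlocks_zero₁₂]
    simp

lemma rank_Mblk_mem_ne {C : Matrix (Fin n) (Fin n) F} (hC : C.IsSymm) (y : Fin n → F) (a : F)
    (ha : a ≠ y ⬝ᵥ C *ᵥ y) :
    (Mblk C (C *ᵥ y) a).rank = C.rank + 1 := by
  classical
  rw [Mblk_eq_conj hC y a]
  rw [rank_mul_eq_left_of_isUnit_det, rank_mul_eq_right_of_isUnit_det]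
  · exact rank_fromBlocks_diag_ne_zero C (sub_ne_zero.mpr ha)
  · rw [det_fromBlocks_zero₁₂]
    simp
  · rw [det_transpose, det_fromBlocks_zero₁₂]
    simp

lemma rank_Mblk_not_mem {C : Matrix (Fin n) (Fin n) F} (hC : C.IsSymm) {b : Fin n → F}
    (hb : ∀ y, C *ᵥ y ≠ b) (a : F) :
    (Mblk C b a).rank = C.rank + 2 := by
  have hXrank : (fromRows C (replicateRow (Fin 1) b)).rank = C.rank + 1 := by
    rw [← rank_transpose, transpose_fromRows, transpose_replicateRow, hC]
    apply rank_fromColumns_col_of_not_mem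
    rintro ⟨x, hx⟩
    exact hb x hx
  have hsplit : Mblk C b a
      = fromCols (fromRows C (replicateRow (Fin 1) b))
          (replicateCol (Fin 1) (Sum.elim b (fun _ => a))) := by
    rw [show (replicateCol (Fin 1) (Sum.elim b (fun _ => a)) : Matrix (Fin n ⊕ Fin 1) (Fin 1) F)
        = fromRows (replicateCol (Fin 1) b) (Matrix.of (fun _ _ => a)) by ext (i|i) j <;> rfl]
    rw [fromCols_fromRows_eq_fromBlocks]
    rfl
  rw [hsplit, rank_fromColumns_col_of_not_mem, hXrank]
  rintro ⟨x, hx⟩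
  rw [mulVecLin_apply, fromRows_mulVec] at hx
  apply hb x
  ext i
  exact congrFun hx (Sum.inl i)

end Stage2
section Stage3
open Matrix Finset Module Submodule
variable {F : Type} [Field F] [Fintype F] {n : ℕ}

lemma card_range_mulVecLin (C : Matrix (Fin n) (Fin n) F) :
    Nat.card {b : Fin n → F // ∃ y, C *ᵥ y = b} = Fintype.card F ^ C.rank := by
  classical
  have he : {b : Fin n → F // ∃ y, C *ᵥ y = b} ≃ ↥(LinearMap.range C.mulVecLin) :=
    Equiv.subtypeEquivRight (fun b => by simp [LinearMap.mem_range, mulVecLin_apply, eq_comm])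
  rw [Nat.card_congr he, Nat.card_eq_fintype_card, card_eq_pow_finrank (K := F), Matrix.rank]

lemma card_bcount {C : Matrix (Fin n) (Fin n) F} (hC : C.IsSymm) (r : ℕ) :
    Nat.card {y : (Fin n → F) × F // (Mblk C y.1 y.2).rank = r} =
      (if C.rank = r then Fintype.card F ^ C.rank else 0)
      + (if C.rank + 1 = r then Fintype.card F ^ C.rank * (Fintype.card F - 1) else 0)
      + (if C.rank + 2 = r then
          (Fintype.card F ^ n - Fintype.card F ^ C.rank) * Fintype.card F else 0) := by
  classical
  set spec : (Fin n → F) → F :=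
    fun b => if h : ∃ y, C *ᵥ y = b then h.choose ⬝ᵥ b else 0 with hspec
  have hspec_val : ∀ b (h : ∃ y, C *ᵥ y = b), spec b = h.choose ⬝ᵥ b := by
    intro b h
    simp only [hspec, dif_pos h]
  have hrk : ∀ b a, (Mblk C b a).rank =
      if h : ∃ y, C *ᵥ y = b then (if a = spec b then C.rank else C.rank + 1)
      else C.rank + 2 := by
    intro b a
    by_cases h : ∃ y, C *ᵥ y = b
    · have hy := h.choose_spec
      rw [dif_pos h]
      by_cases h2 : a = spec b
      · rw [if_pos h2, ← hy]
        refine rank_Mblk_mem hC h.choose a ?_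
        rw [h2, hspec_val b h, hy]
      · rw [if_neg h2, ← hy]
        refine rank_Mblk_mem_ne hC h.choose a ?_
        rw [hspec_val b h] at h2
        rwa [hy]
    · rw [dif_neg h]
      exact rank_Mblk_not_mem hC (not_exists.mp h) a
  -- cardinalities of the three classes
  have hc0 : Nat.card {y : (Fin n → F) × F // (∃ z, C *ᵥ z = y.1) ∧ y.2 = spec y.1}
      = Fintype.card F ^ C.rank := by
    rw [← card_range_mulVecLin C]
    exact Nat.card_congr
      { toFun := fun p => ⟨p.1.1, p.2.1⟩
        invFun := fun b => ⟨(b.1, spec b.1), b.2, rfl⟩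
        left_inv := fun p => Subtype.ext (Prod.ext rfl p.2.2.symm)
        right_inv := fun b => rfl }
  have hc1 : Nat.card {y : (Fin n → F) × F // (∃ z, C *ᵥ z = y.1) ∧ y.2 ≠ spec y.1}
      = Fintype.card F ^ C.rank * (Fintype.card F - 1) := by
    have e : {y : (Fin n → F) × F // (∃ z, C *ᵥ z = y.1) ∧ y.2 ≠ spec y.1}
        ≃ {b : Fin n → F // ∃ z, C *ᵥ z = b} × {c : F // c ≠ 0} :=
      { toFun := fun p => (⟨p.1.1, p.2.1⟩, ⟨p.1.2 - spec p.1.1, sub_ne_zero.mpr p.2.2⟩)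
        invFun := fun x => ⟨(x.1.1, spec x.1.1 + x.2.1), x.1.2,
          fun hh => x.2.2 (by rwa [add_eq_left] at hh)⟩
        left_inv := fun p => Subtype.ext (Prod.ext rfl (add_sub_cancel _ _))
        right_inv := fun x => by
          refine Prod.ext (Subtype.ext rfl) (Subtype.ext ?_)
          simp }
    rw [Nat.card_congr e, Nat.card_prod, card_range_mulVecLin C]
    congr 1
    rw [Nat.card_congr unitsEquivNeZero.symm, Nat.card_units, Nat.card_eq_fintype_card]
  have hc2 : Nat.card {y : (Fin n → F) × F // ¬ ∃ z, C *ᵥ z = y.1}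
      = (Fintype.card F ^ n - Fintype.card F ^ C.rank) * Fintype.card F := by
    have e : {y : (Fin n → F) × F // ¬ ∃ z, C *ᵥ z = y.1}
        ≃ {b : Fin n → F // ¬ ∃ z, C *ᵥ z = b} × F :=
      { toFun := fun p => (⟨p.1.1, p.2⟩, p.1.2)
        invFun := fun x => ⟨(x.1.1, x.2), x.1.2⟩
        left_inv := fun p => rfl
        right_inv := fun x => rfl }
    rw [Nat.card_congr e, Nat.card_prod, Nat.card_eq_fintype_card (α := F)]
    congr 1
    rw [Nat.card_eq_fintype_card, Fintype.card_subtype_compl, Fintype.card_fun, Fintype.card_fin]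
    congr 1
    rw [← card_range_mulVecLin C, Nat.card_eq_fintype_card]
  by_cases hr0 : C.rank = r
  · rw [if_pos hr0, if_neg (by omega), if_neg (by omega), add_zero, add_zero, ← hc0]
    refine Nat.card_congr (Equiv.subtypeEquivRight (fun y => ?_))
    rw [hrk y.1 y.2]
    split_ifs with h h2
    · exact iff_of_true hr0 ⟨h, h2⟩
    · exact iff_of_false (by omega) (fun hpq => h2 hpq.2)
    · exact iff_of_false (by omega) (fun hpq => h hpq.1)
  · by_cases hr1 : C.rank + 1 = r
    · rw [if_neg hr0, if_pos hr1, if_neg (by omega), zero_add, add_zero, ← hc1]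
      refine Nat.card_congr (Equiv.subtypeEquivRight (fun y => ?_))
      rw [hrk y.1 y.2]
      split_ifs with h h2
      · exact iff_of_false (by omega) (fun hpq => hpq.2 h2)
      · exact iff_of_true hr1 ⟨h, h2⟩
      · exact iff_of_false (by omega) (fun hpq => h hpq.1)
    · by_cases hr2 : C.rank + 2 = r
      · rw [if_neg hr0, if_neg hr1, if_pos hr2, zero_add, zero_add, ← hc2]
        refine Nat.card_congr (Equiv.subtypeEquivRight (fun y => ?_))
        rw [hrk y.1 y.2]
        split_ifs with h h2
        · exact iff_of_false (by omega) (fun hpq => hpq h)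
        · exact iff_of_false (by omega) (fun hpq => hpq h)
        · exact iff_of_true hr2 h
      · rw [if_neg hr0, if_neg hr1, if_neg hr2, add_zero, add_zero]
        have : IsEmpty {y : (Fin n → F) × F // (Mblk C y.1 y.2).rank = r} := by
          refine ⟨fun y => ?_⟩
          have := y.2
          rw [hrk y.1.1 y.1.2] at this
          split_ifs at this <;> omega
        exact Nat.card_of_isEmpty

end Stage3
section Stage4
open Matrix Finset Module Submodule
variable {F : Type} [Field F] [Fintype F] {n : ℕ}

instance instDecSymm [DecidableEq F] {m : Type} [Fintype m] [DecidableEq m] :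
    DecidablePred (Matrix.IsSymm : Matrix m m F → Prop) :=
  fun C => decidable_of_iff (Cᵀ = C) Iff.rfl

/-- Number of symmetric `n×n` matrices of rank `r` over `F`. -/
noncomputable def Scount (F : Type) [Field F] [Fintype F] (n r : ℕ) : ℕ :=
  Nat.card {A : Matrix (Fin n) (Fin n) F // A.IsSymm ∧ A.rank = r}

lemma isSymm_reindex {m l : Type} (e : m ≃ l) (A : Matrix m m F) :
    (reindex e e A).IsSymm ↔ A.IsSymm := by
  unfold Matrix.IsSymm
  rw [transpose_reindex]
  exact ⟨fun h => (reindex e e).injective h, fun h => by rw [h]⟩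

lemma toBlocks₁₁_isSymm {B : Matrix (Fin n ⊕ Fin 1) (Fin n ⊕ Fin 1) F} (hB : B.IsSymm) :
    B.toBlocks₁₁.IsSymm := by
  ext i j
  show B (Sum.inl j) (Sum.inl i) = B (Sum.inl i) (Sum.inl j)
  exact hB.apply _ _

lemma eq_Mblk_of_isSymm {B : Matrix (Fin n ⊕ Fin 1) (Fin n ⊕ Fin 1) F} (hB : B.IsSymm) :
    Mblk B.toBlocks₁₁ (fun i => B (Sum.inl i) (Sum.inr 0)) (B (Sum.inr 0) (Sum.inr 0)) = B := by
  ext (i|i) (j|j)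
  · rfl
  · show B (Sum.inl i) (Sum.inr 0) = B (Sum.inl i) (Sum.inr j)
    rw [Subsingleton.elim (0 : Fin 1) j]
  · show B (Sum.inl j) (Sum.inr 0) = B (Sum.inr i) (Sum.inl j)
    rw [Subsingleton.elim (0 : Fin 1) i]
    exact (hB.apply (Sum.inl j) (Sum.inr i)).symm
  · show B (Sum.inr 0) (Sum.inr 0) = B (Sum.inr i) (Sum.inr j)
    rw [Subsingleton.elim (0 : Fin 1) i, Subsingleton.elim (i : Fin 1) j]

lemma Scount_succ_sum [DecidableEq F] (r : ℕ) :
    Scount F (n+1) r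
      = ∑ C : {C : Matrix (Fin n) (Fin n) F // C.IsSymm},
          Nat.card {y : (Fin n → F) × F // (Mblk C.1 y.1 y.2).rank = r} := by
  classical
  have e1 : {A : Matrix (Fin (n+1)) (Fin (n+1)) F // A.IsSymm ∧ A.rank = r}
      ≃ {B : Matrix (Fin n ⊕ Fin 1) (Fin n ⊕ Fin 1) F // B.IsSymm ∧ B.rank = r} :=
    (Equiv.subtypeEquiv (reindex (finSumFinEquiv (m := n) (n := 1)).symm
        (finSumFinEquiv (m := n) (n := 1)).symm) (fun A => by
      rw [isSymm_reindex, rank_reindex]))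
  have e2 : {B : Matrix (Fin n ⊕ Fin 1) (Fin n ⊕ Fin 1) F // B.IsSymm ∧ B.rank = r}
      ≃ {x : {C : Matrix (Fin n) (Fin n) F // C.IsSymm} × ((Fin n → F) × F) //
          (Mblk x.1.1 x.2.1 x.2.2).rank = r} :=
    { toFun := fun B => ⟨(⟨B.1.toBlocks₁₁, toBlocks₁₁_isSymm B.2.1⟩,
        (fun i => B.1 (Sum.inl i) (Sum.inr 0), B.1 (Sum.inr 0) (Sum.inr 0))),
        by rw [eq_Mblk_of_isSymm B.2.1]; exact B.2.2⟩
      invFun := fun x => ⟨Mblk x.1.1.1 x.1.2.1 x.1.2.2,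
        ⟨Mblk_isSymm x.1.1.2 _ _, x.2⟩⟩
      left_inv := fun B => Subtype.ext (eq_Mblk_of_isSymm B.2.1)
      right_inv := fun x => rfl }
  rw [Scount, Nat.card_congr (e1.trans e2)]
  rw [Nat.card_congr (Equiv.subtypeProdEquivSigmaSubtype
    (fun (C : {C : Matrix (Fin n) (Fin n) F // C.IsSymm}) (y : (Fin n → F) × F) =>
      (Mblk C.1 y.1 y.2).rank = r))]
  rw [Nat.card_eq_fintype_card, Fintype.card_sigma]
  exact Finset.sum_congr rfl (fun C _ => (Nat.card_eq_fintype_card).symm)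

lemma sum_ite_rank [DecidableEq F] (k c : ℕ) :
    (∑ C : {C : Matrix (Fin n) (Fin n) F // C.IsSymm}, if C.1.rank = k then c else 0)
      = c * Scount F n k := by
  classical
  rw [← Finset.sum_filter, Finset.sum_const, smul_eq_mul, mul_comm]
  congr 1
  rw [← Fintype.card_subtype, Scount, Nat.card_eq_fintype_card]
  exact Fintype.card_congr (Equiv.subtypeSubtypeEquivSubtypeInter
    (fun C : Matrix (Fin n) (Fin n) F => C.IsSymm) (fun C => C.rank = k))

end Stage4
section Stage5
open Matrix Finset Module Submodule
variable {F : Type} [Field F] [Fintype F] [DecidableEq F] {n : ℕ}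

lemma sum_ite_rank' (k : ℕ) (g : ℕ → ℕ) :
    (∑ C : {C : Matrix (Fin n) (Fin n) F // C.IsSymm},
        if C.1.rank = k then g C.1.rank else 0)
      = g k * Scount F n k := by
  rw [← sum_ite_rank k (g k)]
  refine Finset.sum_congr rfl (fun C _ => ?_)
  split_ifs with h
  · rw [h]
  · rfl

lemma Scount_succ_split (r : ℕ) :
    Scount F (n+1) r
      = (∑ C : {C : Matrix (Fin n) (Fin n) F // C.IsSymm},
          if C.1.rank = r then Fintype.card F ^ C.1.rank else 0)
      + (∑ C : {C : Matrix (Fin n) (Fin n) F // C.IsSymm},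
          if C.1.rank + 1 = r then Fintype.card F ^ C.1.rank * (Fintype.card F - 1) else 0)
      + (∑ C : {C : Matrix (Fin n) (Fin n) F // C.IsSymm},
          if C.1.rank + 2 = r then
            (Fintype.card F ^ n - Fintype.card F ^ C.1.rank) * Fintype.card F else 0) := by
  rw [Scount_succ_sum r, Finset.sum_congr rfl (fun C _ => card_bcount C.2 r),
    Finset.sum_add_distrib, Finset.sum_add_distrib]

lemma Scount_succ_zero : Scount F (n+1) 0 = Scount F n 0 := by
  rw [Scount_succ_split 0]
  have hz2 : (∑ C : {C : Matrix (Fin n) (Fin n) F // C.IsSymm},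
      if C.1.rank + 1 = 0 then Fintype.card F ^ C.1.rank * (Fintype.card F - 1) else 0) = 0 :=
    Finset.sum_eq_zero (fun C _ => if_neg (by omega))
  have hz3 : (∑ C : {C : Matrix (Fin n) (Fin n) F // C.IsSymm},
      if C.1.rank + 2 = 0 then
        (Fintype.card F ^ n - Fintype.card F ^ C.1.rank) * Fintype.card F else 0) = 0 :=
    Finset.sum_eq_zero (fun C _ => if_neg (by omega))
  rw [hz2, hz3, add_zero, add_zero]
  have := sum_ite_rank' (F := F) (n := n) 0 (fun k => Fintype.card F ^ k)
  rw [this, pow_zero, one_mul]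

lemma Scount_succ_one :
    Scount F (n+1) 1 = Fintype.card F * Scount F n 1
      + (Fintype.card F - 1) * Scount F n 0 := by
  rw [Scount_succ_split 1]
  have hz3 : (∑ C : {C : Matrix (Fin n) (Fin n) F // C.IsSymm},
      if C.1.rank + 2 = 1 then
        (Fintype.card F ^ n - Fintype.card F ^ C.1.rank) * Fintype.card F else 0) = 0 :=
    Finset.sum_eq_zero (fun C _ => if_neg (by omega))
  rw [hz3, add_zero]
  have h1 := sum_ite_rank' (F := F) (n := n) 1 (fun k => Fintype.card F ^ k)
  rw [h1, pow_one]
  congr 1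
  have : ∀ C : {C : Matrix (Fin n) (Fin n) F // C.IsSymm},
      (if C.1.rank + 1 = 1 then Fintype.card F ^ C.1.rank * (Fintype.card F - 1) else 0)
        = (if C.1.rank = 0 then Fintype.card F ^ C.1.rank * (Fintype.card F - 1) else 0) :=
    fun C => if_congr (by omega) rfl rfl
  rw [Finset.sum_congr rfl (fun C _ => this C),
    sum_ite_rank' 0 (fun k => Fintype.card F ^ k * (Fintype.card F - 1)), pow_zero, one_mul]

lemma Scount_succ_two (r : ℕ) :
    Scount F (n+1) (r+2)
      = Fintype.card F ^ (r+2) * Scount F n (r+2)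
      + Fintype.card F ^ (r+1) * (Fintype.card F - 1) * Scount F n (r+1)
      + (Fintype.card F ^ n - Fintype.card F ^ r) * Fintype.card F * Scount F n r := by
  rw [Scount_succ_split (r+2)]
  congr 1
  · congr 1
    · exact sum_ite_rank' (r+2) (fun k => Fintype.card F ^ k)
    · have : ∀ C : {C : Matrix (Fin n) (Fin n) F // C.IsSymm},
          (if C.1.rank + 1 = r+2 then Fintype.card F ^ C.1.rank * (Fintype.card F - 1) else 0)
            = (if C.1.rank = r+1 then Fintype.card F ^ C.1.rank * (Fintype.card F - 1) else 0) :=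
        fun C => if_congr (by omega) rfl rfl
      rw [Finset.sum_congr rfl (fun C _ => this C),
        sum_ite_rank' (r+1) (fun k => Fintype.card F ^ k * (Fintype.card F - 1))]
  · have : ∀ C : {C : Matrix (Fin n) (Fin n) F // C.IsSymm},
        (if C.1.rank + 2 = r+2 then
          (Fintype.card F ^ n - Fintype.card F ^ C.1.rank) * Fintype.card F else 0)
          = (if C.1.rank = r then
          (Fintype.card F ^ n - Fintype.card F ^ C.1.rank) * Fintype.card F else 0) :=
      fun C => if_congr (by omega) rfl rfl
    rw [Finset.sum_congr rfl (fun C _ => this C),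
      sum_ite_rank' r (fun k => (Fintype.card F ^ n - Fintype.card F ^ k) * Fintype.card F)]

lemma Scount_zero_zero : Scount F 0 0 = 1 := by
  rw [Scount, Nat.card_eq_one_iff_unique]
  constructor
  · constructor
    intro A B
    apply Subtype.ext
    ext i j
    exact i.elim0
  · refine ⟨⟨0, ?_, ?_⟩⟩
    · show (0 : Matrix (Fin 0) (Fin 0) F)ᵀ = 0
      rw [transpose_zero]
    · rw [Matrix.rank_zero]

lemma Scount_zero_succ (r : ℕ) : Scount F 0 (r+1) = 0 := by
  rw [Scount]
  have : IsEmpty {A : Matrix (Fin 0) (Fin 0) F // A.IsSymm ∧ A.rank = r+1} := by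
    refine ⟨fun A => ?_⟩
    have h := A.2.2
    have h2 := A.1.rank_le_card_width
    rw [Fintype.card_fin] at h2
    omega
  exact Nat.card_of_isEmpty

end Stage5
section Stage6
open Matrix Finset Module Submodule

/-- The closed formula for the number of symmetric matrices of rank `r`. -/
noncomputable def fm (q n r : ℕ) : ℚ :=
  (∏ i ∈ Finset.Icc 1 (r/2), ((q:ℚ) ^ (2*i)) / ((q:ℚ) ^ (2*i) - 1))
    * ∏ i ∈ Finset.range r, ((q:ℚ) ^ (n-i) - 1)

lemma fm_zero (q n : ℕ) : fm q n 0 = 1 := by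
  simp [fm]

lemma fm_eq_zero_of_gt {q n r : ℕ} (h : n < r) : fm q n r = 0 := by
  rw [fm, Finset.prod_eq_zero (Finset.mem_range.mpr h), mul_zero]
  rw [Nat.sub_self, pow_zero, sub_self]

lemma pow_sub_one_ne_zero {q : ℕ} (hq : 2 ≤ q) {j : ℕ} (hj : 1 ≤ j) :
    ((q:ℚ) ^ j - 1) ≠ 0 := by
  have h2 : (2:ℚ) ≤ (q:ℚ) := by exact_mod_cast hq
  have : (2:ℚ) ≤ (q:ℚ) ^ j := by
    calc (2:ℚ) = 2 ^ 1 := by norm_num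
    _ ≤ (2:ℚ) ^ j := by
        apply pow_le_pow_right₀ (by norm_num) hj
    _ ≤ (q:ℚ) ^ j := by
        apply pow_le_pow_left₀ (by norm_num) h2
  intro hcon
  have : (q:ℚ)^j = 1 := by linarith
  linarith

lemma fm_one (q n : ℕ) : fm q (n+1) 1 = q * fm q n 1 + ((q:ℚ) - 1) * fm q n 0 := by
  rw [fm_zero, fm, fm]
  have h0 : (1:ℕ)/2 = 0 := by omega
  rw [h0, Finset.Icc_eq_empty (by omega), Finset.prod_empty, Finset.prod_range_one,
    Finset.prod_range_one, Nat.sub_zero, Nat.sub_zero, pow_succ]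
  ring

lemma fm_step {q : ℕ} (hq : 2 ≤ q) (n r : ℕ) :
    fm q (n+1) (r+2)
      = (q:ℚ)^(r+2) * fm q n (r+2) + (q:ℚ)^(r+1) * ((q:ℚ)-1) * fm q n (r+1)
        + ((q:ℚ)^n - (q:ℚ)^r) * q * fm q n r := by
  by_cases hrn : r + 1 ≤ n
  · -- main case: n = r + m + 1
    obtain ⟨m, hn⟩ : ∃ m, n = r + m + 1 := ⟨n - r - 1, by omega⟩
    have h1 : n - r = m + 1 := by omega
    have h2 : n - (r+1) = m := by omega
    have h3 : n + 1 - 0 = n + 1 := rfl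
    -- product decompositions
    have hP2 : (∏ i ∈ Finset.range (r+2), ((q:ℚ) ^ (n+1-i) - 1))
        = ((q:ℚ)^(n+1) - 1) * ((∏ i ∈ Finset.range r, ((q:ℚ) ^ (n-i) - 1))
            * ((q:ℚ)^(m+1) - 1)) := by
      rw [Finset.prod_range_succ']
      simp only [Nat.succ_sub_succ, Nat.sub_zero]
      rw [Finset.prod_range_succ, h1]
      ring
    have hQ2 : (∏ i ∈ Finset.range (r+2), ((q:ℚ) ^ (n-i) - 1))
        = (∏ i ∈ Finset.range r, ((q:ℚ) ^ (n-i) - 1)) * ((q:ℚ)^(m+1) - 1)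
            * ((q:ℚ)^m - 1) := by
      rw [Finset.prod_range_succ, Finset.prod_range_succ, h1, h2]
    have hQ1 : (∏ i ∈ Finset.range (r+1), ((q:ℚ) ^ (n-i) - 1))
        = (∏ i ∈ Finset.range r, ((q:ℚ) ^ (n-i) - 1)) * ((q:ℚ)^(m+1) - 1) := by
      rw [Finset.prod_range_succ, h1]
    have hd2 : (r+2)/2 = r/2 + 1 := by omega
    have hE : (∏ i ∈ Finset.Icc 1 ((r+2)/2), ((q:ℚ) ^ (2*i)) / ((q:ℚ) ^ (2*i) - 1))
        = (∏ i ∈ Finset.Icc 1 (r/2), ((q:ℚ) ^ (2*i)) / ((q:ℚ) ^ (2*i) - 1))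
          * (((q:ℚ) ^ (2*(r/2+1))) / ((q:ℚ) ^ (2*(r/2+1)) - 1)) := by
      rw [hd2, ← Finset.prod_Icc_succ_top (by omega)]
    have hne : ((q:ℚ) ^ (2*(r/2+1)) - 1) ≠ 0 := pow_sub_one_ne_zero hq (by omega)
    have hqn : (q:ℚ)^n = (q:ℚ)^(r+m+1) := by rw [hn]
    have hqn1 : (q:ℚ)^(n+1) = (q:ℚ)^(r+m+2) := by rw [hn]
    rcases Nat.even_or_odd r with ⟨k, hk⟩ | ⟨k, hk⟩
    · -- r = 2k
      have hr2 : r / 2 = k := by omega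
      have hr12 : (r+1) / 2 = k := by omega
      rw [fm, fm, fm, fm, hP2, hQ2, hQ1, hE, hr2, hr12, hqn, hqn1]
      have hrk : r = 2 * k := by omega
      have hEne : (∏ x ∈ Finset.Icc 1 k, ((q:ℚ) ^ (2*x) - 1)) ≠ 0 :=
        Finset.prod_ne_zero_iff.mpr (fun x hx =>
          pow_sub_one_ne_zero hq (by have := Finset.mem_Icc.mp hx; omega))
      rw [hr2] at hne
      rw [hrk]
      field_simp
      ring
    · -- r = 2k+1
      have hr2 : r / 2 = k := by omega
      have hr12 : (r+1) / 2 = k + 1 := by omega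
      have hE1 : (∏ i ∈ Finset.Icc 1 ((r+1)/2), ((q:ℚ) ^ (2*i)) / ((q:ℚ) ^ (2*i) - 1))
          = (∏ i ∈ Finset.Icc 1 (r/2), ((q:ℚ) ^ (2*i)) / ((q:ℚ) ^ (2*i) - 1))
            * (((q:ℚ) ^ (2*(r/2+1))) / ((q:ℚ) ^ (2*(r/2+1)) - 1)) := by
        rw [hr12, hr2, ← Finset.prod_Icc_succ_top (by omega)]
      rw [fm, fm, fm, fm, hP2, hQ2, hQ1, hE, hE1, hr2, hqn, hqn1]
      have hrk : r = 2 * k + 1 := by omega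
      have hEne : (∏ x ∈ Finset.Icc 1 k, ((q:ℚ) ^ (2*x) - 1)) ≠ 0 :=
        Finset.prod_ne_zero_iff.mpr (fun x hx =>
          pow_sub_one_ne_zero hq (by have := Finset.mem_Icc.mp hx; omega))
      rw [hr2] at hne
      rw [hrk]
      field_simp
      ring
  · -- degenerate case : n ≤ r
    have hz1 : fm q n (r+2) = 0 := fm_eq_zero_of_gt (by omega)
    have hz2 : fm q n (r+1) = 0 := fm_eq_zero_of_gt (by omega)
    rw [hz1, hz2, mul_zero, mul_zero, add_zero, zero_add]
    by_cases hrn2 : r ≤ n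
    · -- r = n
      have : r = n := by omega
      subst this
      rw [fm_eq_zero_of_gt (by omega)]
      ring
    · -- n < r
      rw [fm_eq_zero_of_gt (by omega), fm_eq_zero_of_gt (by omega)]
      ring

end Stage6
section Stage7
open Matrix Finset Module Submodule

theorem Scount_eq_fm (F : Type) [Field F] [Fintype F] [DecidableEq F] (n r : ℕ) :
    (Scount F n r : ℚ) = fm (Fintype.card F) n r := by
  have hq : 2 ≤ Fintype.card F := Fintype.one_lt_card
  induction n generalizing r with
  | zero =>
    match r with
    | 0 => rw [Scount_zero_zero, fm_zero]; norm_num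
    | (r+1) => rw [Scount_zero_succ, fm_eq_zero_of_gt (by omega)]; norm_num
  | succ n IH =>
    match r with
    | 0 => rw [Scount_succ_zero, IH 0, fm_zero, fm_zero]
    | 1 =>
      rw [Scount_succ_one, Nat.cast_add, Nat.cast_mul, Nat.cast_mul,
        Nat.cast_sub (by omega), Nat.cast_one, IH 1, IH 0, fm_one]
    | (r+2) =>
      by_cases hrn : r ≤ n
      · have hc : ((Fintype.card F ^ n - Fintype.card F ^ r : ℕ) : ℚ)
            = (Fintype.card F : ℚ)^n - (Fintype.card F : ℚ)^r := by
          rw [Nat.cast_sub (Nat.pow_le_pow_right (by omega) hrn)]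
          push_cast
          ring
        have hc1 : ((Fintype.card F - 1 : ℕ) : ℚ) = (Fintype.card F : ℚ) - 1 := by
          rw [Nat.cast_sub (by omega)]
          norm_num
        rw [Scount_succ_two]
        push_cast [hc, hc1]
        rw [IH (r+2), IH (r+1), IH r, fm_step hq]
      · have h1 : Scount F n (r+2) = 0 := by
          have := IH (r+2)
          rw [fm_eq_zero_of_gt (by omega)] at this
          exact_mod_cast this
        have h2 : Scount F n (r+1) = 0 := by
          have := IH (r+1)
          rw [fm_eq_zero_of_gt (by omega)] at this
          exact_mod_cast this
        have h3 : Scount F n r = 0 := by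
          have := IH r
          rw [fm_eq_zero_of_gt (by omega)] at this
          exact_mod_cast this
        rw [Scount_succ_two, h1, h2, h3]
        simp [fm_eq_zero_of_gt (show n+1 < r+2 by omega)]

end Stage7

/-- **Counting symmetric matrices of even rank over a finite field.** Let `F` be a
finite field of odd cardinality `q`. The number of symmetric `n×n` matrices over `F`
of rank `r = 2s` (with `2s ≤ n`) equals
`∏_{i=1}^{s} q^{2i}/(q^{2i}−1) · ∏_{i=0}^{2s−1} (q^{n−i} − 1)`. -/
theorem card_symmetric_matrices_even_rank
    (F : Type) [Field F] [Fintype F] (hq : Odd (Fintype.card F))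
    (n s : ℕ) (hs : 2 * s ≤ n) :
    (Nat.card {A : Matrix (Fin n) (Fin n) F // A.IsSymm ∧ A.rank = 2 * s} : ℚ) =
      (∏ i ∈ Finset.Icc 1 s,
        ((Fintype.card F : ℚ) ^ (2 * i)) / ((Fintype.card F : ℚ) ^ (2 * i) - 1)) *
      ∏ i ∈ Finset.range (2 * s), ((Fintype.card F : ℚ) ^ (n - i) - 1) := by
  classical
  have h := Scount_eq_fm F n (2*s)
  rw [show (Nat.card {A : Matrix (Fin n) (Fin n) F // A.IsSymm ∧ A.rank = 2*s})
      = Scount F n (2*s) from rfl, h, fm, show (2*s)/2 = s by omega]
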